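/- Let K, L, M ≥ 1 and N = K + L + M, and consider N qubits forming three stars: the first with leaves 0,…,K−2 and center K−1, the second with leaves K,…,K+L−2 and center K+L−1, the third with leaves K+L,…,N−2 and center N−1. For each star of size m, write T_0 = |+⟩^{⊗(m−1)}⊗|0⟩ and T_1 = |−⟩^{⊗(m−1)}⊗|1⟩ (center last). Then the caterpillar graph state of central-path length 2, i.e. the result of applying all leaf-to-center controlled-Z gates together with CZ_{K−1,K+L−1} and CZ_{K+L−1,N−1} to |+⟩^{⊗N}, equals (1/(2√2)) · Σ_{s₁,s₂,s₃ ∈ {0,1}} (−1)^{s₁s₂ + s₂s₃} · T^{(1)}_{s₁} ⊗ T^{(2)}_{s₂} ⊗ T^{(3)}_{s₃}. -/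
import Mathlib


open Finset

/-- The single-qubit computational basis state `|0⟩`. -/
noncomputable def ket0 : Fin 2 → ℂ := fun t => if t = 0 then 1 else 0

/-- The single-qubit computational basis state `|1⟩`. -/
noncomputable def ket1 : Fin 2 → ℂ := fun t => if t = 1 then 1 else 0

/-- The single-qubit state `|+⟩ = (|0⟩ + |1⟩)/√2`. -/
noncomputable def ketP : Fin 2 → ℂ := fun t => (ket0 t + ket1 t) / Real.sqrt 2

/-- The single-qubit state `|−⟩ = (|0⟩ − |1⟩)/√2`. -/
noncomputable def ketM : Fin 2 → ℂ := fun t => (ket0 t - ket1 t) / Real.sqrt 2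

/-- The controlled-Z gate acting on qubits `j` and `k` of an `n`-qubit state:
`(CZ_{j,k} ψ)(x) = (−1)^{x_j · x_k} · ψ(x)`. -/
def CZ {n : ℕ} (j k : Fin n) (ψ : (Fin n → Fin 2) → ℂ) : (Fin n → Fin 2) → ℂ :=
  fun x => (-1 : ℂ) ^ ((x j : ℕ) * (x k : ℕ)) * ψ x

/-- Apply a product of controlled-Z gates, one for each (ordered) pair in the list. -/
def applyCZs {n : ℕ} (es : List (Fin n × Fin n)) (ψ : (Fin n → Fin 2) → ℂ) :
    (Fin n → Fin 2) → ℂ :=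
  es.foldr (fun e acc => CZ e.1 e.2 acc) ψ

/-- The product state of single-qubit states `φ_j`, i.e. `x ↦ ∏_j φ_j(x_j)`. -/
noncomputable def prodState {n : ℕ} (φ : Fin n → Fin 2 → ℂ) : (Fin n → Fin 2) → ℂ :=
  fun x => ∏ j, φ j (x j)

/-- `ketPM 0 = |+⟩` and `ketPM 1 = |−⟩`. -/
noncomputable def ketPM : Fin 2 → Fin 2 → ℂ := fun s => if s = 0 then ketP else ketM

/-- `ketB 0 = |0⟩` and `ketB 1 = |1⟩`. -/
noncomputable def ketB : Fin 2 → Fin 2 → ℂ := fun s => if s = 0 then ket0 else ket1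

lemma ketP_eq (t : Fin 2) : ketP t = ((Real.sqrt 2 : ℝ) : ℂ)⁻¹ := by
  fin_cases t <;> simp [ketP, ket0, ket1, div_eq_mul_inv]

lemma ketPM_eq (s t : Fin 2) :
    ketPM s t = (-1 : ℂ) ^ ((s : ℕ) * (t : ℕ)) * ((Real.sqrt 2 : ℝ) : ℂ)⁻¹ := by
  fin_cases s <;> fin_cases t <;>
    simp [ketPM, ketP, ketM, ket0, ket1, div_eq_mul_inv]

lemma ketB_eq (s t : Fin 2) : ketB s t = if t = s then 1 else 0 := by
  fin_cases s <;> fin_cases t <;> simp [ketB, ket0, ket1]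

lemma prod_ketPM {m : ℕ} (s : Fin 2) (y : Fin m → Fin 2) :
    (∏ j, ketPM s (y j)) =
      (-1 : ℂ) ^ ((s : ℕ) * ∑ j, (y j : ℕ)) * ((Real.sqrt 2 : ℝ) : ℂ)⁻¹ ^ m := by
  simp only [ketPM_eq]
  rw [Finset.prod_mul_distrib, Finset.prod_pow_eq_pow_sum, Finset.prod_const,
    Finset.mul_sum, Finset.card_univ, Fintype.card_fin]

lemma applyCZs_apply {n : ℕ} (es : List (Fin n × Fin n)) (ψ : (Fin n → Fin 2) → ℂ)
    (x : Fin n → Fin 2) :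
    applyCZs es ψ x =
      (es.map fun e => (-1 : ℂ) ^ ((x e.1 : ℕ) * (x e.2 : ℕ))).prod * ψ x := by
  induction es with
  | nil => simp [applyCZs]
  | cons e es ih =>
    simp only [applyCZs, List.foldr_cons, List.map_cons, List.prod_cons, CZ] at *
    rw [ih, mul_assoc]

lemma list_prod_finRange {m : ℕ} (g : Fin m → ℂ) :
    ((List.finRange m).map g).prod = ∏ j, g j := by
  rw [Fin.prod_univ_def]

/-- The caterpillar graph state of central-path length 2 on `N = K + L + M` qubits
(`K, L, M ≥ 1`), made of three stars (leaves `0,…,K−2`, center `K−1`; leaves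
`K,…,K+L−2`, center `K+L−1`; leaves `K+L,…,N−2`, center `N−1`) whose centers are
joined along a path.  Applying all leaf-to-center CZ gates together with
`CZ_{K−1,K+L−1}` and `CZ_{K+L−1,N−1}` to `|+⟩^{⊗N}` yields
`(1/(2√2)) Σ_{s₁,s₂,s₃} (−1)^{s₁s₂+s₂s₃} T⁽¹⁾_{s₁} ⊗ T⁽²⁾_{s₂} ⊗ T⁽³⁾_{s₃}`,
where `T_0 = |+⟩^{⊗(m−1)}⊗|0⟩` and `T_1 = |−⟩^{⊗(m−1)}⊗|1⟩` for a star of size `m`. -/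
theorem caterpillar_path2_state (K L M : ℕ) (hK : 1 ≤ K) (hL : 1 ≤ L) (hM : 1 ≤ M) :
    applyCZs
        (((List.finRange (K - 1)).map fun j : Fin (K - 1) =>
            ((⟨j, by have := j.isLt; omega⟩ : Fin (K + L + M)),
              (⟨K - 1, by omega⟩ : Fin (K + L + M)))) ++
          ((List.finRange (L - 1)).map fun j : Fin (L - 1) =>
            ((⟨K + j, by have := j.isLt; omega⟩ : Fin (K + L + M)),
              (⟨K + L - 1, by omega⟩ : Fin (K + L + M)))) ++
          ((List.finRange (M - 1)).map fun j : Fin (M - 1) =>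
            ((⟨K + L + j, by have := j.isLt; omega⟩ : Fin (K + L + M)),
              (⟨K + L + M - 1, by omega⟩ : Fin (K + L + M)))) ++
          [((⟨K - 1, by omega⟩ : Fin (K + L + M)), (⟨K + L - 1, by omega⟩ : Fin (K + L + M))),
            ((⟨K + L - 1, by omega⟩ : Fin (K + L + M)),
              (⟨K + L + M - 1, by omega⟩ : Fin (K + L + M)))])
        (prodState fun _ => ketP) =
      fun x : Fin (K + L + M) → Fin 2 =>
        ((2 * Real.sqrt 2 : ℝ) : ℂ)⁻¹ *
          ∑ s₁ : Fin 2, ∑ s₂ : Fin 2, ∑ s₃ : Fin 2,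
            (-1 : ℂ) ^ ((s₁ : ℕ) * (s₂ : ℕ) + (s₂ : ℕ) * (s₃ : ℕ)) *
              (((∏ j : Fin (K - 1), ketPM s₁ (x ⟨j, by have := j.isLt; omega⟩)) *
                  ketB s₁ (x ⟨K - 1, by omega⟩)) *
                ((∏ j : Fin (L - 1), ketPM s₂ (x ⟨K + j, by have := j.isLt; omega⟩)) *
                  ketB s₂ (x ⟨K + L - 1, by omega⟩)) *
                ((∏ j : Fin (M - 1), ketPM s₃ (x ⟨K + L + j, by have := j.isLt; omega⟩)) *
                  ketB s₃ (x ⟨K + L + M - 1, by omega⟩))) := by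
  funext x
  rw [applyCZs_apply]
  simp only [List.map_append, List.prod_append, List.map_map, Function.comp,
    List.map_cons, List.map_nil, List.prod_cons, List.prod_nil,
    list_prod_finRange, Finset.prod_pow_eq_pow_sum, ← Finset.sum_mul,
    prodState, ketP_eq, Finset.prod_const, Finset.card_univ, Fintype.card_fin,
    prod_ketPM, ketB_eq, Fin.sum_univ_two]
  generalize hc1 : x (⟨K - 1, by omega⟩ : Fin (K + L + M)) = b₁
  generalize hc2 : x (⟨K + L - 1, by omega⟩ : Fin (K + L + M)) = b₂
  generalize hc3 : x (⟨K + L + M - 1, by omega⟩ : Fin (K + L + M)) = b₃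
  generalize hS1 : (∑ j : Fin (K - 1),
      ((x (⟨j, by have := j.isLt; omega⟩ : Fin (K + L + M)) : Fin 2) : ℕ)) = S₁
  generalize hS2 : (∑ j : Fin (L - 1),
      ((x (⟨K + j, by have := j.isLt; omega⟩ : Fin (K + L + M)) : Fin 2) : ℕ)) = S₂
  generalize hS3 : (∑ j : Fin (M - 1),
      ((x (⟨K + L + j, by have := j.isLt; omega⟩ : Fin (K + L + M)) : Fin 2) : ℕ)) = S₃
  have hR : ((2 * Real.sqrt 2 : ℝ) : ℂ)⁻¹ = ((Real.sqrt 2 : ℝ) : ℂ)⁻¹ ^ 3 := by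
    have hr : (Real.sqrt 2) ^ 3 = 2 * Real.sqrt 2 := by
      rw [pow_succ, Real.sq_sqrt (by norm_num : (0:ℝ) ≤ 2)]
    rw [← hr, inv_pow]
    push_cast
    ring
  have hN : ((Real.sqrt 2 : ℝ) : ℂ)⁻¹ ^ (K + L + M) =
      ((Real.sqrt 2 : ℝ) : ℂ)⁻¹ ^ 3 * (((Real.sqrt 2 : ℝ) : ℂ)⁻¹ ^ (K - 1) *
        (((Real.sqrt 2 : ℝ) : ℂ)⁻¹ ^ (L - 1) * ((Real.sqrt 2 : ℝ) : ℂ)⁻¹ ^ (M - 1))) := by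
    rw [← pow_add, ← pow_add, ← pow_add]
    congr 1
    omega
  rw [hR, hN]
  have h2 : ∀ t : Fin 2, t = 0 ∨ t = 1 := by decide
  rcases h2 b₁ with h | h <;> subst h <;>
    rcases h2 b₂ with h | h <;> subst h <;>
      rcases h2 b₃ with h | h <;> subst h <;>
        · simp only [Fin.val_zero, Fin.val_one, mul_zero, zero_mul, mul_one, one_mul,
            pow_zero, if_true, if_false, Fin.zero_eq_one_iff, Fin.one_eq_zero_iff,
            Nat.succ_ne_self, ite_true, ite_false, add_zero, zero_add]
          norm_num
          ring
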